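/- Suppose that W₁₃ commutes with W''₁₂ (as holds in the quantum group setting, where the first leg of W lies in the von Neumann algebra M and the first leg of W'' lies in its commutant M'). Then W₂₃ W₁₂ W''₁₂ = W₁₂ W''₁₂ W₁₃ W₂₃ W'₁₃* as bounded operators on H⊗H⊗H. -/

import Mathlib

noncomputable section

open scoped ComplexInnerProductSpace

section Aux

variable {E F : Type*} {ι : Type*}
  [NormedAddCommGroup E] [InnerProductSpace ℂ E]
  [NormedAddCommGroup F] [InnerProductSpace ℂ F]

/-- A conjugate-linear norm-preserving map reverses inner products. -/
lemma anti_inner (A : E → E)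
    (hadd : ∀ x y, A (x + y) = A x + A y)
    (hsmul : ∀ (c : ℂ) (x : E), A (c • x) = (starRingEnd ℂ) c • A x)
    (hnorm : ∀ x, ‖A x‖ = ‖x‖) (x y : E) :
    ⟪A x, A y⟫ = ⟪y, x⟫ := by
  have hI : (RCLike.I : ℂ) = Complex.I := rfl
  have n1 : ‖A x + A y‖ = ‖y + x‖ := by rw [← hadd, hnorm, add_comm]
  have hsub : ∀ u v, A (u - v) = A u - A v := by
    intro u v
    have : u - v = u + (-1 : ℂ) • v := by rw [neg_one_smul, ← sub_eq_add_neg]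
    rw [this, hadd, hsmul]
    simp [sub_eq_add_neg]
  have n2 : ‖A x - A y‖ = ‖y - x‖ := by rw [← hsub, hnorm, norm_sub_rev]
  have h3 : A x - (RCLike.I : ℂ) • A y = A (x + (RCLike.I : ℂ) • y) := by
    rw [hadd, hsmul]
    simp [hI, Complex.conj_I, neg_smul, sub_eq_add_neg]
  have h4 : A x + (RCLike.I : ℂ) • A y = A (x - (RCLike.I : ℂ) • y) := by
    rw [hsub, hsmul]
    simp [hI, Complex.conj_I, neg_smul, sub_eq_add_neg]
  have n3 : ‖A x - (RCLike.I : ℂ) • A y‖ = ‖y - (RCLike.I : ℂ) • x‖ := by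
    rw [h3, hnorm]
    have : y - (RCLike.I : ℂ) • x = (-(RCLike.I : ℂ)) • (x + (RCLike.I : ℂ) • y) := by
      simp [smul_add, smul_smul, hI, Complex.I_mul_I, sub_eq_add_neg, add_comm]
    rw [this, norm_smul]
    simp [hI]
  have n4 : ‖A x + (RCLike.I : ℂ) • A y‖ = ‖y + (RCLike.I : ℂ) • x‖ := by
    rw [h4, hnorm]
    have : y + (RCLike.I : ℂ) • x = (RCLike.I : ℂ) • (x - (RCLike.I : ℂ) • y) := by
      simp [smul_sub, smul_smul, hI, Complex.I_mul_I, sub_eq_add_neg, add_comm]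
    rw [this, norm_smul]
    simp [hI]
  rw [inner_eq_sum_norm_sq_div_four, inner_eq_sum_norm_sq_div_four (𝕜 := ℂ) y x,
    n1, n2, n3, n4]

/-- If a dense-span generating set is closed under complex scalar multiplication, its real
span is dense as well. -/
lemma denseR (s : Set E) (hs : ∀ (c : ℂ), ∀ x ∈ s, c • x ∈ s)
    (h : Dense (Submodule.span ℂ s : Set E)) : Dense (Submodule.span ℝ s : Set E) := by
  have key : ∀ (c : ℂ) (x : E), x ∈ Submodule.span ℝ s → c • x ∈ Submodule.span ℝ s := by
    intro c x hx
    let f : E →ₗ[ℝ] E := c • (LinearMap.id : E →ₗ[ℝ] E)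
    have h1 : Submodule.map f (Submodule.span ℝ s) ≤ Submodule.span ℝ s := by
      rw [Submodule.map_span]
      apply Submodule.span_le.mpr
      rintro y ⟨z, hz, rfl⟩
      exact Submodule.subset_span (hs c z hz)
    exact h1 ⟨x, hx, rfl⟩
  let p : Submodule ℂ E :=
    { carrier := (Submodule.span ℝ s : Set E)
      add_mem' := fun ha hb => Submodule.add_mem _ ha hb
      zero_mem' := Submodule.zero_mem _
      smul_mem' := fun c x hx => key c x hx }
  have hle : (Submodule.span ℂ s : Set E) ⊆ (Submodule.span ℝ s : Set E) := by
    have h2 : Submodule.span ℂ s ≤ p := Submodule.span_le.mpr fun x hx => Submodule.subset_span hx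
    exact fun x hx => h2 hx
  exact h.mono hle

/-- Bundle a conjugate-linear bounded map as a continuous real-linear map. -/
lemma toCLMr (A : E → E)
    (hadd : ∀ x y, A (x + y) = A x + A y)
    (hsmul : ∀ (c : ℂ) (x : E), A (c • x) = (starRingEnd ℂ) c • A x)
    (hnorm : ∀ x, ‖A x‖ = ‖x‖) : ∃ B : E →L[ℝ] E, ∀ x, B x = A x := by
  have hr : ∀ (r : ℝ) (x : E), A (r • x) = r • A x := by
    intro r x
    rw [← algebraMap_smul ℂ r x, Complex.coe_algebraMap, hsmul, Complex.conj_ofReal,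
      ← Complex.coe_algebraMap, algebraMap_smul]
  refine ⟨LinearMap.mkContinuous
    { toFun := A, map_add' := hadd, map_smul' := hr } 1
    (fun x => by rw [one_mul]; exact le_of_eq (hnorm x)), fun x => rfl⟩

lemma lc_inner (h : ι → E) (l l' : ι →₀ ℝ) :
    ⟪Finsupp.linearCombination ℝ h l, Finsupp.linearCombination ℝ h l'⟫ =
      ∑ i ∈ l.support, ∑ j ∈ l'.support, ((l i : ℂ) * (l' j : ℂ)) * ⟪h i, h j⟫ := by
  rw [Finsupp.linearCombination_apply, Finsupp.linearCombination_apply, Finsupp.sum,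
    Finsupp.sum, sum_inner]
  refine Finset.sum_congr rfl fun i _ => ?_
  rw [inner_sum]
  refine Finset.sum_congr rfl fun j _ => ?_
  rw [show (l i) • h i = ((l i : ℂ)) • h i from (algebraMap_smul ℂ (l i) (h i)).symm,
    show (l' j) • h j = ((l' j : ℂ)) • h j from (algebraMap_smul ℂ (l' j) (h j)).symm,
    inner_smul_left, inner_smul_right, Complex.conj_ofReal]
  ring

/-- Extension of an "anti-isometric" assignment on a spanning family to a continuous
real-linear map. -/
lemma antiextend [CompleteSpace F] (g : ι → E) (g' : ι → F)
    (hd : Dense (Submodule.span ℝ (Set.range g) : Set E))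
    (hin : ∀ p q : ι, ⟪g' p, g' q⟫ = (starRingEnd ℂ) ⟪g p, g q⟫) :
    ∃ Θ : E →L[ℝ] F, ∀ p, Θ (g p) = g' p := by
  classical
  set S : (ι →₀ ℝ) →ₗ[ℝ] E := Finsupp.linearCombination ℝ g with hS
  set S' : (ι →₀ ℝ) →ₗ[ℝ] F := Finsupp.linearCombination ℝ g' with hS'
  have hnorm : ∀ l, ‖S' l‖ = ‖S l‖ := by
    intro l
    have h1 : ⟪S' l, S' l⟫ = (starRingEnd ℂ) ⟪S l, S l⟫ := by
      rw [hS, hS', lc_inner, lc_inner, map_sum]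
      refine Finset.sum_congr rfl fun i _ => ?_
      rw [map_sum]
      refine Finset.sum_congr rfl fun j _ => ?_
      rw [hin, map_mul, map_mul, Complex.conj_ofReal, Complex.conj_ofReal]
    rw [inner_self_eq_norm_sq_to_K (𝕜 := ℂ), inner_self_eq_norm_sq_to_K (𝕜 := ℂ), map_pow,
      RCLike.conj_ofReal] at h1
    have h3 : (‖S' l‖ : ℝ) ^ 2 = (‖S l‖ : ℝ) ^ 2 := by exact_mod_cast h1
    nlinarith [norm_nonneg (S' l), norm_nonneg (S l)]
  have welldef : ∀ l₁ l₂, S l₁ = S l₂ → S' l₁ = S' l₂ := by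
    intro l₁ l₂ h
    have h0 : S (l₁ - l₂) = 0 := by rw [map_sub, h, sub_self]
    have h1 : ‖S' (l₁ - l₂)‖ = 0 := by rw [hnorm, h0, norm_zero]
    have h2 : S' l₁ - S' l₂ = 0 := by rwa [norm_eq_zero, map_sub] at h1
    exact sub_eq_zero.mp h2
  set sR : Submodule ℝ E := Submodule.span ℝ (Set.range g) with hsR
  have rep : ∀ x : sR, ∃ l, S l = (x : E) := by
    intro x
    obtain ⟨l, hl⟩ := Finsupp.mem_span_range_iff_exists_finsupp.mp x.2
    exact ⟨l, by rw [hS, Finsupp.linearCombination_apply]; exact hl⟩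
  choose r hr using rep
  have θadd : ∀ x y : sR, S' (r (x + y)) = S' (r x) + S' (r y) := by
    intro x y
    rw [← map_add]
    exact welldef _ _ (by rw [map_add, hr, hr, hr, Submodule.coe_add])
  have θsmul : ∀ (c : ℝ) (x : sR), S' (r (c • x)) = c • S' (r x) := by
    intro c x
    rw [← map_smul]
    exact welldef _ _ (by rw [map_smul, hr, hr, SetLike.val_smul])
  set θ : sR →ₗ[ℝ] F :=
    { toFun := fun x => S' (r x)
      map_add' := θadd
      map_smul' := θsmul } with hθ
  have θnorm : ∀ x : sR, ‖θ x‖ ≤ 1 * ‖x‖ := by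
    intro x
    rw [one_mul, hθ]
    simp only [LinearMap.coe_mk, AddHom.coe_mk]
    rw [hnorm, hr]
    rfl
  set θc : sR →L[ℝ] F := θ.mkContinuous 1 θnorm with hθc
  have hui : IsUniformInducing (sR.subtypeL : sR →L[ℝ] E) :=
    isUniformEmbedding_subtype_val.isUniformInducing
  have hdr : DenseRange (sR.subtypeL : sR →L[ℝ] E) := hd.denseRange_val
  refine ⟨θc.extend sR.subtypeL, ?_⟩
  intro p
  have hg : g p ∈ sR := Submodule.subset_span ⟨p, rfl⟩
  have h1 : θc.extend sR.subtypeL (sR.subtypeL ⟨g p, hg⟩) = θc ⟨g p, hg⟩ :=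
    ContinuousLinearMap.extend_eq _ hdr hui _
  have h2 : θc ⟨g p, hg⟩ = S' (r ⟨g p, hg⟩) := rfl
  have h3 : S' (r ⟨g p, hg⟩) = S' (Finsupp.single p 1) := by
    apply welldef
    rw [hr, hS, Finsupp.linearCombination_single, one_smul]
  have h4 : S' (Finsupp.single p 1) = g' p := by
    rw [hS', Finsupp.linearCombination_single, one_smul]
  have h5 : sR.subtypeL ⟨g p, hg⟩ = g p := rfl
  rw [h5] at h1
  rw [h1, h2, h3, h4]

end Aux
set_option maxHeartbeats 1000000 in
theorem stmt_9
    {H H2 H3 : Type*}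
    [NormedAddCommGroup H] [InnerProductSpace ℂ H] [CompleteSpace H]
    [NormedAddCommGroup H2] [InnerProductSpace ℂ H2] [CompleteSpace H2]
    [NormedAddCommGroup H3] [InnerProductSpace ℂ H3] [CompleteSpace H3]
    -- the tensor map H × H → H ⊗ H = H2
    (τ : H →L[ℂ] H →L[ℂ] H2)
    (hτinner : ∀ a b c d : H, (inner ℂ (τ a b) (τ c d) : ℂ) = (inner ℂ a c : ℂ) * (inner ℂ b d : ℂ))
    (hτdense : Dense (Submodule.span ℂ (Set.range fun p : H × H => τ p.1 p.2) : Set H2))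
    -- the tensor maps (H ⊗ H) × H → H ⊗ H ⊗ H = H3 and H × (H ⊗ H) → H ⊗ H ⊗ H
    (m : H2 →L[ℂ] H →L[ℂ] H3)
    (m' : H →L[ℂ] H2 →L[ℂ] H3)
    (hmm' : ∀ a b c : H, m (τ a b) c = m' a (τ b c))
    (hminner : ∀ (u v : H2) (c d : H), (inner ℂ (m u c) (m v d) : ℂ) = (inner ℂ u v : ℂ) * (inner ℂ c d : ℂ))
    (hmdense : Dense (Submodule.span ℂ (Set.range fun p : (H × H) × H => m (τ p.1.1 p.1.2) p.2) : Set H3))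
    -- the leg maps T ↦ T₁₂ = T ⊗ 1, T ↦ T₂₃ = 1 ⊗ T, T ↦ T₁₃ = (Σ⊗1)(1⊗T)(Σ⊗1)
    (leg12 leg23 leg13 : (H2 →L[ℂ] H2) → (H3 →L[ℂ] H3))
    (hleg12 : ∀ (T : H2 →L[ℂ] H2) (u : H2) (c : H), leg12 T (m u c) = m (T u) c)
    (hleg23 : ∀ (T : H2 →L[ℂ] H2) (a : H) (v : H2), leg23 T (m' a v) = m' a (T v))
    -- the flip unitary Σ on H ⊗ H
    (Sg : H2 →L[ℂ] H2)
    (hSg : ∀ a b : H, Sg (τ a b) = τ b a)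
    (hleg13 : ∀ T : H2 →L[ℂ] H2, leg13 T = leg12 Sg * leg23 T * leg12 Sg)
    -- the multiplicative unitary W, satisfying the pentagonal equation
    (W : H2 →L[ℂ] H2)
    (hWl : W * star W = 1) (hWr : star W * W = 1)
    (hPent : leg12 W * leg13 W * leg23 W = leg23 W * leg12 W)
    -- J : a conjugate-linear isometric involution of H
    (J : H → H)
    (hJadd : ∀ x y : H, J (x + y) = J x + J y)
    (hJsmul : ∀ (c : ℂ) (x : H), J (c • x) = (starRingEnd ℂ) c • J x)
    (hJnorm : ∀ x : H, ‖J x‖ = ‖x‖)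
    (hJinv : ∀ x : H, J (J x) = x)
    -- Jh : a conjugate-linear isometric involution of H
    (Jh : H → H)
    (hJhadd : ∀ x y : H, Jh (x + y) = Jh x + Jh y)
    (hJhsmul : ∀ (c : ℂ) (x : H), Jh (c • x) = (starRingEnd ℂ) c • Jh x)
    (hJhnorm : ∀ x : H, ‖Jh x‖ = ‖x‖)
    (hJhinv : ∀ x : H, Jh (Jh x) = x)
    -- JJ : the conjugate-linear involution J⊗J of H ⊗ H
    (JJ : H2 → H2)
    (hJJadd : ∀ x y : H2, JJ (x + y) = JJ x + JJ y)
    (hJJsmul : ∀ (c : ℂ) (x : H2), JJ (c • x) = (starRingEnd ℂ) c • JJ x)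
    (hJJnorm : ∀ x : H2, ‖JJ x‖ = ‖x‖)
    (hJJinv : ∀ x : H2, JJ (JJ x) = x)
    (hJJtmul : ∀ a b : H, JJ (τ a b) = τ (J a) (J b))
    -- JJh : the conjugate-linear involution J⊗Ĵ of H ⊗ H
    (JJh : H2 → H2)
    (hJJhadd : ∀ x y : H2, JJh (x + y) = JJh x + JJh y)
    (hJJhsmul : ∀ (c : ℂ) (x : H2), JJh (c • x) = (starRingEnd ℂ) c • JJh x)
    (hJJhnorm : ∀ x : H2, ‖JJh x‖ = ‖x‖)
    (hJJhinv : ∀ x : H2, JJh (JJh x) = x)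
    (hJJhtmul : ∀ a b : H, JJh (τ a b) = τ (J a) (Jh b))
    -- JhJ : the conjugate-linear involution Ĵ⊗J of H ⊗ H
    (JhJ : H2 → H2)
    (hJhJadd : ∀ x y : H2, JhJ (x + y) = JhJ x + JhJ y)
    (hJhJsmul : ∀ (c : ℂ) (x : H2), JhJ (c • x) = (starRingEnd ℂ) c • JhJ x)
    (hJhJnorm : ∀ x : H2, ‖JhJ x‖ = ‖x‖)
    (hJhJinv : ∀ x : H2, JhJ (JhJ x) = x)
    (hJhJtmul : ∀ a b : H, JhJ (τ a b) = τ (Jh a) (J b))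
    -- the assumption W* = (Ĵ⊗J) W (Ĵ⊗J)
    (hWstar : ∀ x : H2, (star W) x = JhJ (W (JhJ x)))
    -- W' = (J⊗J) W (J⊗J), the commutant multiplicative unitary
    (W' : H2 →L[ℂ] H2)
    (hW' : ∀ x : H2, W' x = JJ (W (JJ x)))
    -- W'' = (J⊗Ĵ) W (J⊗Ĵ) (in the quantum group setting, W'' = (W'ᵒᵖ)*)
    (W'' : H2 →L[ℂ] H2)
    (hW'' : ∀ x : H2, W'' x = JJh (W (JJh x)))
    -- W₁₃ commutes with W''₁₂
    (hcomm : Commute (leg13 W) (leg12 W'')) :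
    leg23 W * leg12 W * leg12 W'' =
      leg12 W * leg12 W'' * leg13 W * leg23 W * star (leg13 W') := by
  classical
  -- pointwise unitarity of W
  have hWlp : ∀ y : H2, W ((star W) y) = y := by
    intro y
    have := DFunLike.congr_fun hWl y
    simpa [ContinuousLinearMap.mul_apply] using this
  have hWrp : ∀ y : H2, (star W) (W y) = y := by
    intro y
    have := DFunLike.congr_fun hWr y
    simpa [ContinuousLinearMap.mul_apply] using this
  -- extensionality principles
  have extC3 : ∀ (S T : H3 →L[ℂ] H3), (∀ a b c, S (m (τ a b) c) = T (m (τ a b) c)) → S = T := by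
    intro S T h
    refine ContinuousLinearMap.ext_on hmdense ?_
    rintro x ⟨⟨⟨a, b⟩, c⟩, rfl⟩
    exact h a b c
  have extC2 : ∀ (S T : H2 →L[ℂ] H2), (∀ a b, S (τ a b) = T (τ a b)) → S = T := by
    intro S T h
    refine ContinuousLinearMap.ext_on hτdense ?_
    rintro x ⟨⟨a, b⟩, rfl⟩
    exact h a b
  have vec3 : ∀ u v : H3, (∀ a b c, ⟪u, m (τ a b) c⟫ = ⟪v, m (τ a b) c⟫) → u = v := by
    intro u v h
    have h2 : innerSL ℂ u = innerSL ℂ v := by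
      refine ContinuousLinearMap.ext_on hmdense ?_
      rintro x ⟨⟨⟨a, b⟩, c⟩, rfl⟩
      simpa using h a b c
    apply ext_inner_right ℂ
    intro w
    simpa using DFunLike.congr_fun h2 w
  have vec2 : ∀ u v : H2, (∀ a b, ⟪u, τ a b⟫ = ⟪v, τ a b⟫) → u = v := by
    intro u v h
    have h2 : innerSL ℂ u = innerSL ℂ v := by
      refine ContinuousLinearMap.ext_on hτdense ?_
      rintro x ⟨⟨a, b⟩, rfl⟩
      simpa using h a b
    apply ext_inner_right ℂ
    intro w
    simpa using DFunLike.congr_fun h2 w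
  -- dense real spans
  have hdR2 : Dense (Submodule.span ℝ (Set.range fun p : H × H => τ p.1 p.2) : Set H2) := by
    refine denseR _ ?_ hτdense
    rintro c x ⟨⟨a, b⟩, rfl⟩
    exact ⟨(c • a, b), by simp [map_smul]⟩
  have hdR3 : Dense (Submodule.span ℝ
      (Set.range fun p : (H × H) × H => m (τ p.1.1 p.1.2) p.2) : Set H3) := by
    refine denseR _ ?_ hmdense
    rintro c x ⟨⟨⟨a, b⟩, d⟩, rfl⟩
    exact ⟨((c • a, b), d), by simp [map_smul]⟩
  have extR3 : ∀ (S T : H3 →L[ℝ] H3), (∀ a b c, S (m (τ a b) c) = T (m (τ a b) c)) → S = T := by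
    intro S T h
    refine ContinuousLinearMap.ext_on hdR3 ?_
    rintro x ⟨⟨⟨a, b⟩, c⟩, rfl⟩
    exact h a b c
  have extR2 : ∀ (S T : H2 →L[ℝ] H3), (∀ a b, S (τ a b) = T (τ a b)) → S = T := by
    intro S T h
    refine ContinuousLinearMap.ext_on hdR2 ?_
    rintro x ⟨⟨a, b⟩, rfl⟩
    exact h a b
  -- bundled conjugations
  obtain ⟨JJhb, hJJhb⟩ := toCLMr JJh hJJhadd hJJhsmul hJJhnorm
  obtain ⟨JhJb, hJhJb⟩ := toCLMr JhJ hJhJadd hJhJsmul hJhJnorm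
  obtain ⟨JJb, hJJb⟩ := toCLMr JJ hJJadd hJJsmul hJJnorm
  -- anti-unitarity of the conjugations
  have aJ : ∀ x y : H, ⟪J x, J y⟫ = ⟪y, x⟫ := anti_inner J hJadd hJsmul hJnorm
  have aJh : ∀ x y : H, ⟪Jh x, Jh y⟫ = ⟪y, x⟫ := anti_inner Jh hJhadd hJhsmul hJhnorm
  have aJJ : ∀ x y : H2, ⟪JJ x, JJ y⟫ = ⟪y, x⟫ := anti_inner JJ hJJadd hJJsmul hJJnorm
  -- the two antiunitaries on H3 : Θ = J ⊗ Ĵ ⊗ J and Θ' = Ĵ ⊗ J ⊗ J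
  obtain ⟨Θ, hΘ0⟩ := antiextend (fun p : (H × H) × H => m (τ p.1.1 p.1.2) p.2)
      (fun p => m (τ (J p.1.1) (Jh p.1.2)) (J p.2)) hdR3 (by
        rintro ⟨⟨a, b⟩, c⟩ ⟨⟨d, e⟩, f⟩
        simp only [hminner, hτinner, aJ, aJh, map_mul]
        rw [← inner_conj_symm a d, ← inner_conj_symm b e, ← inner_conj_symm c f]
        simp only [RingHomCompTriple.comp_apply, RingHom.id_apply, starRingEnd_self_apply])
  obtain ⟨Θ', hΘ'0⟩ := antiextend (fun p : (H × H) × H => m (τ p.1.1 p.1.2) p.2)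
      (fun p => m (τ (Jh p.1.1) (J p.1.2)) (J p.2)) hdR3 (by
        rintro ⟨⟨a, b⟩, c⟩ ⟨⟨d, e⟩, f⟩
        simp only [hminner, hτinner, aJ, aJh, map_mul]
        rw [← inner_conj_symm a d, ← inner_conj_symm b e, ← inner_conj_symm c f]
        simp only [RingHomCompTriple.comp_apply, RingHom.id_apply, starRingEnd_self_apply])
  have hΘg : ∀ a b c, Θ (m (τ a b) c) = m (τ (J a) (Jh b)) (J c) := fun a b c => hΘ0 ((a, b), c)
  have hΘ'g : ∀ a b c, Θ' (m (τ a b) c) = m (τ (Jh a) (J b)) (J c) := fun a b c => hΘ'0 ((a, b), c)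
  -- action of Θ, Θ' on partial tensors
  have Θm : ∀ (u : H2) (c : H), Θ (m u c) = m (JJh u) (J c) := by
    intro u c
    have h := extR2 (Θ.comp ((m.flip c).restrictScalars ℝ))
        (((m.flip (J c)).restrictScalars ℝ).comp JJhb) (by
      intro a b
      simp only [ContinuousLinearMap.comp_apply, ContinuousLinearMap.coe_restrictScalars',
        ContinuousLinearMap.flip_apply]
      rw [hΘg, hJJhb, hJJhtmul])
    have := DFunLike.congr_fun h u
    simpa [hJJhb] using this
  have Θm' : ∀ (a : H) (v : H2), Θ (m' a v) = m' (J a) (JhJ v) := by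
    intro a v
    have h := extR2 (Θ.comp ((m' a).restrictScalars ℝ))
        (((m' (J a)).restrictScalars ℝ).comp JhJb) (by
      intro b c
      simp only [ContinuousLinearMap.comp_apply, ContinuousLinearMap.coe_restrictScalars']
      rw [← hmm', hΘg, hmm', hJhJb, hJhJtmul])
    have := DFunLike.congr_fun h v
    simpa [hJhJb] using this
  have Θ'm' : ∀ (a : H) (v : H2), Θ' (m' a v) = m' (Jh a) (JJ v) := by
    intro a v
    have h := extR2 (Θ'.comp ((m' a).restrictScalars ℝ))
        (((m' (Jh a)).restrictScalars ℝ).comp JJb) (by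
      intro b c
      simp only [ContinuousLinearMap.comp_apply, ContinuousLinearMap.coe_restrictScalars']
      rw [← hmm', hΘ'g, hmm', hJJb, hJJtmul])
    have := DFunLike.congr_fun h v
    simpa [hJJb] using this
  -- involutivity
  have ΘΘ : ∀ x : H3, Θ (Θ x) = x := by
    have h := extR3 (Θ.comp Θ) (ContinuousLinearMap.id ℝ H3) (by
      intro a b c
      simp only [ContinuousLinearMap.comp_apply, ContinuousLinearMap.id_apply]
      rw [hΘg, hΘg, hJinv, hJinv, hJhinv])
    intro x
    simpa using DFunLike.congr_fun h x
  have Θ'Θ' : ∀ x : H3, Θ' (Θ' x) = x := by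
    have h := extR3 (Θ'.comp Θ') (ContinuousLinearMap.id ℝ H3) (by
      intro a b c
      simp only [ContinuousLinearMap.comp_apply, ContinuousLinearMap.id_apply]
      rw [hΘ'g, hΘ'g, hJinv, hJinv, hJhinv])
    intro x
    simpa using DFunLike.congr_fun h x
  -- conjugation identities
  have hC12 : ∀ x : H3, Θ (leg12 W (Θ x)) = leg12 W'' x := by
    have h := extR3 (Θ.comp (((leg12 W).restrictScalars ℝ).comp Θ))
        ((leg12 W'').restrictScalars ℝ) (by
      intro a b c
      simp only [ContinuousLinearMap.comp_apply, ContinuousLinearMap.coe_restrictScalars']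
      rw [hΘg, hleg12, Θm, hJinv, ← hJJhtmul, ← hW'', hleg12])
    intro x
    simpa using DFunLike.congr_fun h x
  have hC23 : ∀ x : H3, Θ (leg23 W (Θ x)) = leg23 (star W) x := by
    have h := extR3 (Θ.comp (((leg23 W).restrictScalars ℝ).comp Θ))
        ((leg23 (star W)).restrictScalars ℝ) (by
      intro a b c
      simp only [ContinuousLinearMap.comp_apply, ContinuousLinearMap.coe_restrictScalars']
      rw [hmm', Θm', hleg23, Θm', hJinv, ← hWstar, hleg23])
    intro x
    simpa using DFunLike.congr_fun h x
  have hC23' : ∀ x : H3, Θ' (leg23 W (Θ' x)) = leg23 W' x := by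
    have h := extR3 (Θ'.comp (((leg23 W).restrictScalars ℝ).comp Θ'))
        ((leg23 W').restrictScalars ℝ) (by
      intro a b c
      simp only [ContinuousLinearMap.comp_apply, ContinuousLinearMap.coe_restrictScalars']
      rw [hmm', Θ'm', hleg23, Θ'm', hJhinv, ← hW', hleg23])
    intro x
    simpa using DFunLike.congr_fun h x
  have hCSg : ∀ x : H3, Θ (leg12 Sg x) = leg12 Sg (Θ' x) := by
    have h := extR3 (Θ.comp ((leg12 Sg).restrictScalars ℝ))
        (((leg12 Sg).restrictScalars ℝ).comp Θ') (by
      intro a b c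
      simp only [ContinuousLinearMap.comp_apply, ContinuousLinearMap.coe_restrictScalars']
      rw [hleg12, hSg, hΘg, hΘ'g, hleg12, hSg])
    intro x
    simpa using DFunLike.congr_fun h x
  have hCSg' : ∀ x : H3, Θ' (leg12 Sg x) = leg12 Sg (Θ x) := by
    have h := extR3 (Θ'.comp ((leg12 Sg).restrictScalars ℝ))
        (((leg12 Sg).restrictScalars ℝ).comp Θ) (by
      intro a b c
      simp only [ContinuousLinearMap.comp_apply, ContinuousLinearMap.coe_restrictScalars']
      rw [hleg12, hSg, hΘ'g, hΘg, hleg12, hSg])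
    intro x
    simpa using DFunLike.congr_fun h x
  have hC13 : ∀ x : H3, Θ (leg13 W (Θ x)) = leg13 W' x := by
    intro x
    rw [hleg13 W, hleg13 W']
    simp only [ContinuousLinearMap.mul_apply]
    rw [← hCSg' x, hCSg, hC23']
  -- the conjugated pentagon equation
  have hPentp : ∀ y : H3, leg12 W (leg13 W (leg23 W y)) = leg23 W (leg12 W y) := by
    intro y
    have := DFunLike.congr_fun hPent y
    simpa [ContinuousLinearMap.mul_apply] using this
  have pent2 : leg12 W'' * leg13 W' * leg23 (star W) = leg23 (star W) * leg12 W'' := by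
    apply ContinuousLinearMap.ext
    intro x
    simp only [ContinuousLinearMap.mul_apply]
    calc leg12 W'' (leg13 W' (leg23 (star W) x))
        = leg12 W'' (leg13 W' (Θ (leg23 W (Θ x)))) := by rw [hC23]
      _ = leg12 W'' (Θ (leg13 W (Θ (Θ (leg23 W (Θ x)))))) := by rw [hC13]
      _ = leg12 W'' (Θ (leg13 W (leg23 W (Θ x)))) := by rw [ΘΘ]
      _ = Θ (leg12 W (Θ (Θ (leg13 W (leg23 W (Θ x)))))) := by rw [hC12]
      _ = Θ (leg12 W (leg13 W (leg23 W (Θ x)))) := by rw [ΘΘ]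
      _ = Θ (leg23 W (leg12 W (Θ x))) := by rw [hPentp]
      _ = Θ (leg23 W (Θ (Θ (leg12 W (Θ x))))) := by rw [ΘΘ]
      _ = Θ (leg23 W (Θ (leg12 W'' x))) := by rw [hC12]
      _ = leg23 (star W) (leg12 W'' x) := hC23 _
  -- multiplicativity of the legs
  have l12mul : ∀ A B : H2 →L[ℂ] H2, leg12 (A * B) = leg12 A * leg12 B := by
    intro A B
    apply extC3
    intro a b c
    simp [hleg12, ContinuousLinearMap.mul_apply]
  have l12one : leg12 1 = 1 := by
    apply extC3
    intro a b c
    simp [hleg12]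
  have l23mul : ∀ A B : H2 →L[ℂ] H2, leg23 (A * B) = leg23 A * leg23 B := by
    intro A B
    apply extC3
    intro a b c
    simp [hmm', hleg23, ContinuousLinearMap.mul_apply]
  have l23one : leg23 1 = 1 := by
    apply extC3
    intro a b c
    simp [hmm', hleg23]
  have SgSg : Sg * Sg = 1 := by
    apply extC2
    intro a b
    simp [ContinuousLinearMap.mul_apply, hSg]
  have hSg2 : leg12 Sg * leg12 Sg = 1 := by rw [← l12mul, SgSg, l12one]
  have l13mul : ∀ A B : H2 →L[ℂ] H2, leg13 A * leg13 B = leg13 (A * B) := by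
    intro A B
    rw [hleg13, hleg13, hleg13, l23mul]
    calc leg12 Sg * leg23 A * leg12 Sg * (leg12 Sg * leg23 B * leg12 Sg)
        = leg12 Sg * leg23 A * (leg12 Sg * leg12 Sg) * leg23 B * leg12 Sg := by
          simp only [mul_assoc]
      _ = leg12 Sg * (leg23 A * leg23 B) * leg12 Sg := by
          rw [hSg2, mul_one]
          simp only [mul_assoc]
      _ = leg12 Sg * leg23 A * leg23 B * leg12 Sg := by simp only [mul_assoc]
  have l13one : leg13 1 = 1 := by
    rw [hleg13, l23one, mul_one, hSg2]
  -- adjoints of the legs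
  have adj12 : ∀ T : H2 →L[ℂ] H2, star (leg12 T) = leg12 (star T) := by
    intro T
    apply extC3
    intro a b c
    apply vec3
    intro d e f
    have hL : ⟪star (leg12 T) (m (τ a b) c), m (τ d e) f⟫
        = ⟪(ContinuousLinearMap.adjoint T) (τ a b), τ d e⟫ * ⟪c, f⟫ := by
      rw [ContinuousLinearMap.star_eq_adjoint, ContinuousLinearMap.adjoint_inner_left,
        hleg12, hminner, ← ContinuousLinearMap.adjoint_inner_left T]
    have hR : ⟪leg12 (star T) (m (τ a b) c), m (τ d e) f⟫
        = ⟪(ContinuousLinearMap.adjoint T) (τ a b), τ d e⟫ * ⟪c, f⟫ := by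
      rw [ContinuousLinearMap.star_eq_adjoint, hleg12, hminner]
    rw [hL, hR]
  have adjSg : star Sg = Sg := by
    apply extC2
    intro a b
    apply vec2
    intro c d
    rw [ContinuousLinearMap.star_eq_adjoint, ContinuousLinearMap.adjoint_inner_left,
      hSg, hSg, hτinner, hτinner]
    ring
  have hm'adj : ∀ a b : H,
      (ContinuousLinearMap.adjoint (m' b)).comp (m' a) = (⟪b, a⟫ : ℂ) • 1 := by
    intro a b
    apply extC2
    intro c d
    apply vec2
    intro e f
    rw [ContinuousLinearMap.comp_apply, ContinuousLinearMap.adjoint_inner_left,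
      ← hmm', ← hmm', hminner, hτinner]
    simp only [ContinuousLinearMap.smul_apply, ContinuousLinearMap.one_apply,
      inner_smul_left, hτinner, inner_conj_symm]
    ring
  have hm'inner : ∀ (a b : H) (v w : H2), ⟪m' a v, m' b w⟫ = ⟪a, b⟫ * ⟪v, w⟫ := by
    intro a b v w
    rw [← ContinuousLinearMap.adjoint_inner_left (m' b) w (m' a v)]
    have h := DFunLike.congr_fun (hm'adj a b) v
    simp only [ContinuousLinearMap.comp_apply, ContinuousLinearMap.smul_apply,
      ContinuousLinearMap.one_apply] at h
    rw [h, inner_smul_left, inner_conj_symm]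
  have adj23 : ∀ T : H2 →L[ℂ] H2, star (leg23 T) = leg23 (star T) := by
    intro T
    apply extC3
    intro a b c
    apply vec3
    intro d e f
    have hL : ⟪star (leg23 T) (m (τ a b) c), m (τ d e) f⟫
        = ⟪a, d⟫ * ⟪(ContinuousLinearMap.adjoint T) (τ b c), τ e f⟫ := by
      rw [ContinuousLinearMap.star_eq_adjoint, ContinuousLinearMap.adjoint_inner_left,
        hmm' a b c, hmm' d e f, hleg23, hm'inner, ← ContinuousLinearMap.adjoint_inner_left T]
    have hR : ⟪leg23 (star T) (m (τ a b) c), m (τ d e) f⟫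
        = ⟪a, d⟫ * ⟪(ContinuousLinearMap.adjoint T) (τ b c), τ e f⟫ := by
      rw [ContinuousLinearMap.star_eq_adjoint, hmm' a b c, hmm' d e f, hleg23, hm'inner]
    rw [hL, hR]
  have adj13 : star (leg13 W') = leg13 (star W') := by
    rw [hleg13, hleg13, star_mul, star_mul, adj12, adjSg, adj23, mul_assoc]
  -- W' is unitary
  have hW'star : ∀ x : H2, (star W') x = JJ ((star W) (JJ x)) := by
    intro x
    apply ext_inner_right ℂ
    intro v
    rw [ContinuousLinearMap.star_eq_adjoint, ContinuousLinearMap.adjoint_inner_left]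
    conv_rhs => rw [← hJJinv v]
    rw [aJJ, ContinuousLinearMap.star_eq_adjoint, ContinuousLinearMap.adjoint_inner_right,
      show W (JJ v) = JJ (JJ (W (JJ v))) from (hJJinv _).symm, aJJ, hW' v]
  have W'u1 : W' * star W' = 1 := by
    apply ContinuousLinearMap.ext
    intro x
    simp only [ContinuousLinearMap.mul_apply, ContinuousLinearMap.one_apply]
    rw [hW'star, hW', hJJinv, hWlp, hJJinv]
  have hB'B's : leg13 W' * leg13 (star W') = 1 := by rw [l13mul, W'u1, l13one]
  -- derive C * A'' * B' = A'' * C from the conjugated pentagon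
  have hCsC : leg23 (star W) * leg23 W = 1 := by rw [← l23mul, hWr, l23one]
  have hCCs : leg23 W * leg23 (star W) = 1 := by rw [← l23mul, hWl, l23one]
  have p2' : leg23 W * leg12 W'' * leg13 W' = leg12 W'' * leg23 W := by
    calc leg23 W * leg12 W'' * leg13 W'
        = leg23 W * leg12 W'' * leg13 W' * 1 := (mul_one _).symm
      _ = leg23 W * leg12 W'' * leg13 W' * (leg23 (star W) * leg23 W) := by rw [hCsC]
      _ = leg23 W * (leg12 W'' * leg13 W' * leg23 (star W)) * leg23 W := by
          simp only [mul_assoc]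
      _ = leg23 W * (leg23 (star W) * leg12 W'') * leg23 W := by rw [pent2]
      _ = (leg23 W * leg23 (star W)) * (leg12 W'' * leg23 W) := by simp only [mul_assoc]
      _ = leg12 W'' * leg23 W := by rw [hCCs, one_mul]
  -- final assembly
  rw [adj13]
  have e1 : leg12 W * leg12 W'' * leg13 W * leg23 W * leg13 (star W')
      = leg12 W * leg13 W * leg23 W * leg12 W'' := by
    calc leg12 W * leg12 W'' * leg13 W * leg23 W * leg13 (star W')
        = leg12 W * ((leg12 W'' * leg13 W) * (leg23 W * leg13 (star W'))) := by
          simp only [mul_assoc]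
      _ = leg12 W * ((leg13 W * leg12 W'') * (leg23 W * leg13 (star W'))) := by
          rw [← hcomm.eq]
      _ = leg12 W * (leg13 W * ((leg12 W'' * leg23 W) * leg13 (star W'))) := by
          simp only [mul_assoc]
      _ = leg12 W * (leg13 W * ((leg23 W * leg12 W'' * leg13 W') * leg13 (star W'))) := by
          rw [p2']
      _ = leg12 W * (leg13 W * (leg23 W * (leg12 W'' * (leg13 W' * leg13 (star W'))))) := by
          simp only [mul_assoc]
      _ = leg12 W * (leg13 W * (leg23 W * leg12 W'')) := by rw [hB'B's, mul_one]
      _ = leg12 W * leg13 W * leg23 W * leg12 W'' := by simp only [mul_assoc]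
  rw [e1, hPent]
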